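/- Let f be a probability density on (0,1) such that p̃(1-p̃)f(p̃) → 0 as p̃ → 0 and as p̃ → 1, and let g* = p̃(1-p̃) f'/f be its associated score transform. Then for any bounded continuously differentiable function g on [0,1], E[(g(p̃) - g*(p̃))²] = E[g(p̃)²] + 2E[g(p̃)(1 - 2p̃) + p̃(1-p̃)g'(p̃)] + C, where C = E[g*(p̃)²] does not depend on g. -/

import Mathlib

open MeasureTheory Filter

set_option maxHeartbeats 1000000

/-- Risk identity: for any bounded `C¹` function `g`,
`E[(g(p̃) - g*(p̃))²] = E[g(p̃)²] + 2E[g(p̃)(1-2p̃) + p̃(1-p̃)g'(p̃)] + C`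
with `C = E[g*(p̃)²]`, where `g* = p̃(1-p̃) f'/f`. -/
theorem risk_identity (f : ℝ → ℝ)
    (hf_pos : ∀ t ∈ Set.Ioo (0 : ℝ) 1, 0 < f t)
    (hf_density : ∫ t in Set.Ioo (0 : ℝ) 1, f t = 1)
    (hf_int : IntegrableOn f (Set.Ioo (0 : ℝ) 1))
    (hf_diff : ∀ t ∈ Set.Ioo (0 : ℝ) 1, DifferentiableAt ℝ f t)
    (hlim0 : Tendsto (fun t => t * (1 - t) * f t)
      (nhdsWithin 0 (Set.Ioo (0 : ℝ) 1)) (nhds 0))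
    (hlim1 : Tendsto (fun t => t * (1 - t) * f t)
      (nhdsWithin 1 (Set.Ioo (0 : ℝ) 1)) (nhds 0))
    (gs : ℝ → ℝ) (hgs : ∀ t, gs t = t * (1 - t) * deriv f t / f t)
    (hgs_int : IntegrableOn (fun t => (gs t) ^ 2 * f t) (Set.Ioo (0 : ℝ) 1))
    (g : ℝ → ℝ) (hg_bdd : ∃ M, ∀ t, |g t| ≤ M) (hg_smooth : ContDiff ℝ 1 g) :
    ∫ t in Set.Ioo (0 : ℝ) 1, (g t - gs t) ^ 2 * f t
      = (∫ t in Set.Ioo (0 : ℝ) 1, (g t) ^ 2 * f t)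
        + 2 * (∫ t in Set.Ioo (0 : ℝ) 1,
            (g t * (1 - 2 * t) + t * (1 - t) * deriv g t) * f t)
        + ∫ t in Set.Ioo (0 : ℝ) 1, (gs t) ^ 2 * f t := by
  obtain ⟨M, hM⟩ := hg_bdd
  have hM0 : 0 ≤ M := le_trans (abs_nonneg _) (hM 0)
  have hgc : Continuous g := hg_smooth.continuous
  have hg'c : Continuous (deriv g) := hg_smooth.continuous_deriv le_rfl
  obtain ⟨C, hC⟩ := IsCompact.exists_bound_of_continuousOn isCompact_Icc
    (hg'c.continuousOn (s := Set.Icc (0:ℝ) 1))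
  have hC0 : 0 ≤ C := le_trans (norm_nonneg _) (hC 0 (by norm_num))
  set φ : ℝ → ℝ := fun t => g t * (1 - 2 * t) + t * (1 - t) * deriv g t with hφ
  -- integrability of φ * f
  have hφf : IntegrableOn (fun t => φ t * f t) (Set.Ioo (0:ℝ) 1) := by
    apply hf_int.bdd_mul (c := M + C)
      ((hgc.mul (by continuity)).add
        (((continuous_id.mul (continuous_const.sub continuous_id)).mul
          hg'c))).aestronglyMeasurable
    filter_upwards [ae_restrict_mem measurableSet_Ioo] with t ht
    have h1 : |g t * (1 - 2 * t)| ≤ M := by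
      rw [abs_mul]
      calc |g t| * |1 - 2 * t| ≤ M * 1 := by
            apply mul_le_mul (hM t) _ (abs_nonneg _) hM0
            rw [abs_le]; constructor <;> nlinarith [ht.1, ht.2]
        _ = M := mul_one M
    have h2 : |t * (1 - t) * deriv g t| ≤ C := by
      rw [abs_mul]
      calc |t * (1 - t)| * |deriv g t| ≤ 1 * C := by
            apply mul_le_mul _ (hC t (Set.mem_Icc_of_Ioo ht)) (abs_nonneg _) one_pos.le
            rw [abs_le]; constructor <;> nlinarith [ht.1, ht.2]
        _ = C := one_mul C
    calc ‖φ t‖ ≤ |g t * (1 - 2 * t)| + |t * (1 - t) * deriv g t| := abs_add_le _ _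
      _ ≤ M + C := add_le_add h1 h2
  -- integrability of g² f
  have hg2f : IntegrableOn (fun t => (g t) ^ 2 * f t) (Set.Ioo (0:ℝ) 1) := by
    apply hf_int.bdd_mul (c := M ^ 2) (hgc.pow 2).aestronglyMeasurable
    filter_upwards with t
    rw [Real.norm_eq_abs, Pi.pow_apply, abs_pow]
    exact pow_le_pow_left₀ (abs_nonneg _) (hM t) 2
  -- measurability of gs on the restricted measure
  have hfm : AEMeasurable f (volume.restrict (Set.Ioo (0:ℝ) 1)) :=
    hf_int.aestronglyMeasurable.aemeasurable
  have hgsm : AEMeasurable gs (volume.restrict (Set.Ioo (0:ℝ) 1)) := by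
    have : gs = fun t => t * (1 - t) * deriv f t / f t := funext hgs
    rw [this]
    exact (((measurable_id.mul (measurable_const.sub measurable_id)).mul
      (measurable_deriv f)).aemeasurable).div hfm
  -- integrability of g * gs * f
  have hggsf : IntegrableOn (fun t => g t * gs t * f t) (Set.Ioo (0:ℝ) 1) := by
    have hbound : IntegrableOn (fun t => M / 2 * ((gs t) ^ 2 * f t) + M / 2 * f t)
        (Set.Ioo (0:ℝ) 1) := (hgs_int.const_mul _).add (hf_int.const_mul _)
    have hmeas : AEStronglyMeasurable (fun t => g t * gs t * f t)
        (volume.restrict (Set.Ioo (0:ℝ) 1)) :=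
      ((hgc.aemeasurable.mul hgsm).mul hfm).aestronglyMeasurable
    refine hbound.mono' hmeas ?_
    filter_upwards [ae_restrict_mem measurableSet_Ioo] with t ht
    have hft : 0 < f t := hf_pos t ht
    have h1 : |g t * gs t * f t| = |g t| * |gs t| * f t := by
      rw [abs_mul, abs_mul, abs_of_pos hft]
    rw [Real.norm_eq_abs, h1]
    have h2 : |g t| * |gs t| ≤ M * |gs t| :=
      mul_le_mul_of_nonneg_right (hM t) (abs_nonneg _)
    have h3 : (gs t) ^ 2 = |gs t| ^ 2 := (sq_abs _).symm
    have h4 : 0 ≤ M * f t * (|gs t| - 1) ^ 2 :=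
      mul_nonneg (mul_nonneg hM0 hft.le) (sq_nonneg _)
    rw [h3]
    nlinarith [h4, mul_le_mul_of_nonneg_right h2 hft.le]
  -- integrability of t(1-t) f' g
  have hh2 : IntegrableOn (fun t => t * (1 - t) * deriv f t * g t)
      (Set.Ioo (0:ℝ) 1) := by
    apply hggsf.congr
    filter_upwards [ae_restrict_mem measurableSet_Ioo] with t ht
    have hft : f t ≠ 0 := (hf_pos t ht).ne'
    rw [hgs t]; field_simp
  -- FTC on (0,1)
  have hFTC : ∫ t in (0:ℝ)..1,
      (φ t * f t + t * (1 - t) * deriv f t * g t) = 0 := by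
    have hderiv : ∀ x ∈ Set.Ioo (0:ℝ) 1,
        HasDerivAt (fun t => t * (1 - t) * g t * f t)
          (φ x * f x + x * (1 - x) * deriv f x * g x) x := by
      intro x hx
      have h1 : HasDerivAt (fun t : ℝ => t * (1 - t)) (1 - 2 * x) x := by
        have : HasDerivAt (fun t : ℝ => t * (1 - t)) (1 * (1 - x) + x * (0 - 1)) x :=
          (hasDerivAt_id x).mul ((hasDerivAt_const x (1:ℝ)).sub (hasDerivAt_id x))
        convert this using 1
        ring
      have h2 : HasDerivAt (fun t => t * (1 - t) * g t * f t)
          (((1 - 2 * x) * g x + x * (1 - x) * deriv g x) * f x + x * (1 - x) * g x * deriv f x) x :=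
        (h1.mul ((hg_smooth.differentiable one_ne_zero) x).hasDerivAt).mul
        ((hf_diff x hx).hasDerivAt)
      convert h2 using 1
      simp only [hφ]; ring
    have hint : IntervalIntegrable
        (fun t => φ t * f t + t * (1 - t) * deriv f t * g t) volume 0 1 := by
      rw [intervalIntegrable_iff_integrableOn_Ioc_of_le (by norm_num),
        integrableOn_Ioc_iff_integrableOn_Ioo]
      exact hφf.add hh2
    have hbd0 : Tendsto (fun t => t * (1 - t) * g t * f t)
        (nhdsWithin (0:ℝ) (Set.Ioi 0)) (nhds 0) := by
      rw [← nhdsWithin_Ioo_eq_nhdsGT (show (0:ℝ) < 1 by norm_num)]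
      apply squeeze_zero_norm (a := fun t => |t * (1 - t) * f t| * M)
      · intro t
        calc ‖t * (1 - t) * g t * f t‖ = |t * (1 - t) * f t| * |g t| := by
              rw [Real.norm_eq_abs, ← abs_mul]; ring_nf
          _ ≤ |t * (1 - t) * f t| * M :=
              mul_le_mul_of_nonneg_left (hM t) (abs_nonneg _)
      · simpa using hlim0.abs.mul_const M
    have hbd1 : Tendsto (fun t => t * (1 - t) * g t * f t)
        (nhdsWithin (1:ℝ) (Set.Iio 1)) (nhds 0) := by
      rw [← nhdsWithin_Ioo_eq_nhdsLT (show (0:ℝ) < 1 by norm_num)]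
      apply squeeze_zero_norm (a := fun t => |t * (1 - t) * f t| * M)
      · intro t
        calc ‖t * (1 - t) * g t * f t‖ = |t * (1 - t) * f t| * |g t| := by
              rw [Real.norm_eq_abs, ← abs_mul]; ring_nf
          _ ≤ |t * (1 - t) * f t| * M :=
              mul_le_mul_of_nonneg_left (hM t) (abs_nonneg _)
      · simpa using hlim1.abs.mul_const M
    have := intervalIntegral.integral_eq_sub_of_hasDerivAt_of_tendsto
      (show (0:ℝ) < 1 by norm_num) hderiv hint hbd0 hbd1
    simpa using this
  -- convert to Ioo and split
  have hsplit : (∫ t in Set.Ioo (0:ℝ) 1, φ t * f t)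
      + ∫ t in Set.Ioo (0:ℝ) 1, t * (1 - t) * deriv f t * g t = 0 := by
    rw [← integral_add hφf hh2]
    rw [intervalIntegral.integral_of_le (by norm_num : (0:ℝ) ≤ 1)] at hFTC
    rw [← integral_Ioc_eq_integral_Ioo]
    exact hFTC
  -- cross term
  have hcross : ∫ t in Set.Ioo (0:ℝ) 1, g t * gs t * f t
      = ∫ t in Set.Ioo (0:ℝ) 1, t * (1 - t) * deriv f t * g t := by
    apply setIntegral_congr_fun measurableSet_Ioo
    intro t ht
    have hft : f t ≠ 0 := (hf_pos t ht).ne'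
    show g t * gs t * f t = t * (1 - t) * deriv f t * g t
    rw [hgs t]; field_simp
  -- expand the square
  have hexp : ∫ t in Set.Ioo (0:ℝ) 1, (g t - gs t) ^ 2 * f t
      = (∫ t in Set.Ioo (0:ℝ) 1, (g t) ^ 2 * f t)
        - 2 * (∫ t in Set.Ioo (0:ℝ) 1, g t * gs t * f t)
        + ∫ t in Set.Ioo (0:ℝ) 1, (gs t) ^ 2 * f t := by
    have heq : ∀ t, (g t - gs t) ^ 2 * f t
        = (g t) ^ 2 * f t - 2 * (g t * gs t * f t) + (gs t) ^ 2 * f t := by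
      intro t; ring
    rw [show (fun t => (g t - gs t) ^ 2 * f t)
        = fun t => (g t) ^ 2 * f t - 2 * (g t * gs t * f t) + (gs t) ^ 2 * f t
        from funext heq]
    have hc2 : IntegrableOn (fun t => 2 * (g t * gs t * f t)) (Set.Ioo (0:ℝ) 1) :=
      hggsf.const_mul 2
    have hsub : IntegrableOn (fun t => (g t) ^ 2 * f t - 2 * (g t * gs t * f t))
        (Set.Ioo (0:ℝ) 1) := hg2f.sub hc2
    rw [integral_add hsub hgs_int, integral_sub hg2f hc2, integral_const_mul]
  rw [hexp, hcross]
  have : ∫ t in Set.Ioo (0:ℝ) 1, t * (1 - t) * deriv f t * g t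
      = - ∫ t in Set.Ioo (0:ℝ) 1, φ t * f t := by linarith
  rw [this]
  ring
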